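/- Any tight finite game has a completely mixed Nash equilibrium, i.e. a Nash equilibrium σ with σ_i(c_i) > 0 for every player i and every pure strategy c_i ∈ C_i. -/

import Mathlib

open Finset

section Carath

variable {E : Type*} [NormedAddCommGroup E] [NormedSpace ℝ E] [FiniteDimensional ℝ E]

lemma carath_aux {ι : Type} [Fintype ι] [DecidableEq ι] (v : ι → E) :
    ∀ (k : ℕ) (f : ι → ℝ), (∀ s, 0 ≤ f s) → (univ.filter fun s => f s ≠ 0).card ≤ k →
    ∃ (t : Finset ι) (g : ι → ℝ), LinearIndependent ℝ (fun s : t => v s) ∧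
      (∀ s, 0 ≤ g s) ∧ (∀ s ∉ t, g s = 0) ∧ ∑ s, g s • v s = ∑ s, f s • v s := by
  intro k
  induction k with
  | zero =>
    intro f hf hcard
    have hf0 : ∀ s, f s = 0 := by
      intro s
      by_contra hs
      have : s ∈ univ.filter fun s => f s ≠ 0 := by simp [hs]
      have := Finset.card_pos.mpr ⟨s, this⟩
      omega
    refine ⟨∅, f, ?_, hf, fun s _ => hf0 s, rfl⟩
    haveI : IsEmpty ((∅ : Finset ι) : Set ι) := by simp
    exact linearIndependent_empty_type
  | succ k ih =>
    intro f hf hcard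
    set t : Finset ι := univ.filter fun s => f s ≠ 0 with ht
    by_cases hLI : LinearIndependent ℝ (fun s : t => v s)
    · refine ⟨t, f, hLI, hf, fun s hs => ?_, rfl⟩
      by_contra h
      exact hs (by simp [ht, h])
    · obtain ⟨g0, hg0sum, s0, hs0⟩ := Fintype.not_linearIndependent_iff.mp hLI
      -- extend g0 by zero, choosing sign so that some coordinate is positive
      obtain ⟨G, hGsum, hGsupp, hGpos⟩ :
          ∃ G : ι → ℝ, (∑ s, G s • v s = 0) ∧ (∀ s ∉ t, G s = 0) ∧ ∃ s, 0 < G s := by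
        rcases lt_or_gt_of_ne hs0 with hneg | hpos
        · refine ⟨fun s => if hs : s ∈ t then -g0 ⟨s, hs⟩ else 0, ?_, ?_, ?_⟩
          · rw [← Finset.sum_subset (Finset.subset_univ t)
              (fun s _ hs => by simp [dif_neg hs])]
            rw [← Finset.sum_attach t]
            simp only [Finset.coe_mem, dif_pos]
            simp only [neg_smul]
            rw [Finset.sum_neg_distrib, neg_eq_zero]
            simpa [Finset.univ_eq_attach] using hg0sum
          · intro s hs; simp [dif_neg hs]
          · exact ⟨s0, by simp [dif_pos s0.2, neg_pos.mpr hneg]⟩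
        · refine ⟨fun s => if hs : s ∈ t then g0 ⟨s, hs⟩ else 0, ?_, ?_, ?_⟩
          · rw [← Finset.sum_subset (Finset.subset_univ t)
              (fun s _ hs => by simp [dif_neg hs])]
            rw [← Finset.sum_attach t]
            simp only [Finset.coe_mem, dif_pos]
            exact hg0sum
          · intro s hs; simp [dif_neg hs]
          · exact ⟨s0, by simp [dif_pos s0.2, hpos]⟩
      obtain ⟨sp, hsp⟩ := hGpos
      have hspt : sp ∈ t := by
        by_contra h; rw [hGsupp sp h] at hsp; exact lt_irrefl _ hsp
      have hne : (t.filter fun s => 0 < G s).Nonempty := ⟨sp, by simp [hspt, hsp]⟩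
      obtain ⟨sm, hsmmem, hsmmin⟩ := Finset.exists_min_image _ (fun s => f s / G s) hne
      rw [Finset.mem_filter] at hsmmem
      obtain ⟨hsmt, hsmG⟩ := hsmmem
      set r : ℝ := f sm / G sm with hr
      have hr0 : 0 ≤ r := div_nonneg (hf sm) (le_of_lt hsmG)
      set f' : ι → ℝ := fun s => f s - r * G s with hf'def
      have hf'nonneg : ∀ s, 0 ≤ f' s := by
        intro s
        by_cases hGs : 0 < G s
        · have hst : s ∈ t := by
            by_contra h; rw [hGsupp s h] at hGs; exact lt_irrefl _ hGs
          have hrs := hsmmin s (Finset.mem_filter.mpr ⟨hst, hGs⟩)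
          have : r * G s ≤ f s := (le_div_iff₀ hGs).mp hrs
          simp only [hf'def]; linarith
        · push_neg at hGs
          have : r * G s ≤ 0 := mul_nonpos_of_nonneg_of_nonpos hr0 hGs
          simp [hf'def]; nlinarith [hf s]
      have hf'sm : f' sm = 0 := by
        simp [hf'def, hr, div_mul_cancel₀ _ (ne_of_gt hsmG)]
      have hf'supp : (univ.filter fun s => f' s ≠ 0) ⊆ t.erase sm := by
        intro s hs
        rw [Finset.mem_filter] at hs
        refine Finset.mem_erase.mpr ⟨?_, ?_⟩
        · rintro rfl; exact hs.2 hf'sm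
        · by_contra h
          exact hs.2 (by simp [hf'def, hGsupp s h, (by simpa [ht] using h : f s = 0)])
      have hcard' : (univ.filter fun s => f' s ≠ 0).card ≤ k := by
        have h1 := Finset.card_le_card hf'supp
        have h2 := Finset.card_erase_of_mem hsmt
        omega
      have hsum' : ∑ s, f' s • v s = ∑ s, f s • v s := by
        simp only [hf'def, sub_smul, Finset.sum_sub_distrib, mul_smul]
        rw [← Finset.smul_sum, hGsum, smul_zero, sub_zero]
      obtain ⟨t', g, hLI', hg, hgsupp, hgsum⟩ := ih f' hf'nonneg hcard'
      exact ⟨t', g, hLI', hg, hgsupp, hgsum.trans hsum'⟩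



lemma cone_isClosed {ι : Type} [Fintype ι] [DecidableEq ι] (v : ι → E) :
    IsClosed {z : E | ∃ f : ι → ℝ, (∀ s, 0 ≤ f s) ∧ z = ∑ s, f s • v s} := by
  classical
  -- linear map from coefficients on t
  let L : Finset ι → ((ι → ℝ) →ₗ[ℝ] E) := fun t =>
    { toFun := fun g => ∑ s ∈ t, g s • v s
      map_add' := by intro a b; simp [add_smul, Finset.sum_add_distrib]
      map_smul' := by intro c a; simp [mul_smul, Finset.smul_sum] }
  have key : {z : E | ∃ f : ι → ℝ, (∀ s, 0 ≤ f s) ∧ z = ∑ s, f s • v s} =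
      ⋃ t ∈ {t : Finset ι | LinearIndependent ℝ (fun s : t => v s)},
        (L t) '' {g : ι → ℝ | ∀ s, 0 ≤ g s} := by
    ext z
    simp only [Set.mem_setOf_eq, Set.mem_iUnion, Set.mem_image]
    constructor
    · rintro ⟨f, hf, rfl⟩
      obtain ⟨t, g, hLI, hg, hgsupp, hgsum⟩ :=
        carath_aux v (univ.filter fun s => f s ≠ 0).card f hf le_rfl
      refine ⟨t, hLI, g, hg, ?_⟩
      show ∑ s ∈ t, g s • v s = _
      rw [Finset.sum_subset (Finset.subset_univ t) (fun s _ hs => by rw [hgsupp s hs, zero_smul])]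
      exact hgsum
    · rintro ⟨t, hLI, g, hg, rfl⟩
      refine ⟨fun s => if s ∈ t then g s else 0, fun s => by dsimp; split <;> [exact hg s; rfl], ?_⟩
      show (∑ s ∈ t, g s • v s) = ∑ s : ι, (if s ∈ t then g s else 0) • v s
      rw [← Finset.sum_subset (Finset.subset_univ t)
        (fun s _ hs => by rw [if_neg hs, zero_smul])]
      exact Finset.sum_congr rfl fun s hs => by rw [if_pos hs]
  rw [key]
  apply Set.Finite.isClosed_biUnion (Set.toFinite _)
  intro t hLI
  -- restrict L t to functions supported on t is not needed; use the map from (t → ℝ)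
  let L' : (↥t → ℝ) →ₗ[ℝ] E :=
    { toFun := fun g => ∑ s : ↥t, g s • v s
      map_add' := by intro a b; simp [add_smul, Finset.sum_add_distrib]
      map_smul' := by intro c a; simp [mul_smul, Finset.smul_sum] }
  have himg : (L t) '' {g : ι → ℝ | ∀ s, 0 ≤ g s} = L' '' {g : ↥t → ℝ | ∀ s, 0 ≤ g s} := by
    ext z
    simp only [Set.mem_image, Set.mem_setOf_eq]
    constructor
    · rintro ⟨g, hg, rfl⟩
      refine ⟨fun s => g s, fun s => hg s, ?_⟩
      show ∑ s : ↥t, g s • v s = ∑ s ∈ t, g s • v s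
      rw [← Finset.sum_attach t (fun s => g s • v s)]
      rfl
    · rintro ⟨g, hg, rfl⟩
      refine ⟨fun s => if hs : s ∈ t then g ⟨s, hs⟩ else 0,
        fun s => by dsimp; split <;> [exact hg _; rfl], ?_⟩
      show ∑ s ∈ t, _ • v s = ∑ s : ↥t, g s • v s
      rw [← Finset.sum_attach t]
      exact Finset.sum_congr rfl fun s _ => by rw [dif_pos s.2]
  rw [himg]
  have hinj : Function.Injective L' := by
    intro a b hab
    have h0 : L' (a - b) = 0 := by rw [map_sub, hab, sub_self]
    have := Fintype.linearIndependent_iff.mp hLI (a - b) (by simpa [L'] using h0)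
    funext s
    have := this s
    simpa [sub_eq_zero] using this
  have hclosed : IsClosed {g : ↥t → ℝ | ∀ s, 0 ≤ g s} := by
    have : {g : ↥t → ℝ | ∀ s, 0 ≤ g s} = Set.pi Set.univ (fun _ => Set.Ici (0:ℝ)) := by
      ext g
      simp only [Set.mem_setOf_eq, Set.mem_pi, Set.mem_univ, Set.mem_Ici]
      exact ⟨fun h i _ => h i, fun h s => h s (Set.mem_univ s)⟩
    rw [this]
    exact isClosed_set_pi fun i _ => isClosed_Ici
  exact (L'.isClosedEmbedding_of_injective (LinearMap.ker_eq_bot.mpr hinj)).isClosedMap _ hclosed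

end Carath

lemma farkas {m n : Type} [Fintype m] [Fintype n] [DecidableEq m] [DecidableEq n]
    (M : Matrix m n ℝ) (b : m → ℝ) :
    (∃ x : n → ℝ, (∀ j, 0 ≤ x j) ∧ ∀ i, M.mulVec x i ≤ b i) ∨
    (∃ u : m → ℝ, (∀ i, 0 ≤ u i) ∧ (∀ j, 0 ≤ M.transpose.mulVec u j) ∧ dotProduct b u < 0) := by
  classical
  let v : (n ⊕ m) → (m → ℝ) := fun s => Sum.elim (fun j i => M i j) (fun i0 => Pi.single i0 1) s
  let K : Set (m → ℝ) := {z | ∃ f : n ⊕ m → ℝ, (∀ s, 0 ≤ f s) ∧ z = ∑ s, f s • v s}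
  by_cases hb : b ∈ K
  · left
    obtain ⟨f, hf, hbeq⟩ := hb
    refine ⟨fun j => f (Sum.inl j), fun j => hf _, fun i => ?_⟩
    have : b i = M.mulVec (fun j => f (Sum.inl j)) i + f (Sum.inr i) := by
      rw [hbeq]
      have : (∑ s : n ⊕ m, f s • v s) i = ∑ s : n ⊕ m, f s * v s i := by
        rw [Finset.sum_apply]; rfl
      rw [this, Fintype.sum_sum_type]
      congr 1
      · simp [Matrix.mulVec, dotProduct, v, mul_comm]
      · simp only [v, Sum.elim_inr]
        rw [Finset.sum_eq_single i (fun i' _ hne => by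
          simp [Pi.single_apply, hne]) (by simp)]
        simp [Pi.single_apply]
    have := hf (Sum.inr i)
    linarith
  · right
    have hKconv : Convex ℝ K := by
      rintro z1 ⟨f1, hf1, rfl⟩ z2 ⟨f2, hf2, rfl⟩ a c ha hc _
      refine ⟨fun s => a * f1 s + c * f2 s,
        fun s => add_nonneg (mul_nonneg ha (hf1 s)) (mul_nonneg hc (hf2 s)), ?_⟩
      simp only [add_smul, mul_smul, Finset.sum_add_distrib, Finset.smul_sum]
    have hKclosed : IsClosed K := cone_isClosed v
    obtain ⟨φ, u0, hlt, hu0⟩ := geometric_hahn_banach_closed_point hKconv hKclosed hb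
    have h0K : (0 : m → ℝ) ∈ K := ⟨0, fun s => le_rfl, by simp⟩
    have hu0pos : 0 < u0 := by have := hlt 0 h0K; simpa using this
    have hφK : ∀ z ∈ K, φ z ≤ 0 := by
      rintro z ⟨f, hf, rfl⟩
      by_contra h
      push_neg at h
      set zz := ∑ s, f s • v s
      have hmem : ∀ c : ℝ, 0 ≤ c → c • zz ∈ K := by
        intro c hc
        refine ⟨fun s => c * f s, fun s => mul_nonneg hc (hf s), ?_⟩
        simp only [zz, Finset.smul_sum, mul_smul]
      have hc : (0:ℝ) ≤ (u0 + 1) / φ zz := by positivity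
      have := hlt _ (hmem _ hc)
      rw [map_smul, smul_eq_mul, div_mul_cancel₀ _ (ne_of_gt h)] at this
      linarith
    set y : m → ℝ := fun i => -φ (Pi.single i 1) with hy
    have hy0 : ∀ i, 0 ≤ y i := by
      intro i
      have : (Pi.single i 1 : m → ℝ) ∈ K := by
        refine ⟨fun s => if s = Sum.inr i then 1 else 0,
          fun s => by dsimp only; split <;> norm_num, ?_⟩
        rw [Finset.sum_eq_single (Sum.inr i) (fun s _ hne => by simp [hne])
          (by simp)]
        simp [v]
      have := hφK _ this
      simp only [hy]; linarith
    have hφeval : ∀ z : m → ℝ, φ z = -∑ i, z i * y i := by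
      intro z
      have hz : z = ∑ i, z i • (Pi.single i 1 : m → ℝ) := by
        funext i'
        rw [Finset.sum_apply]
        rw [Finset.sum_eq_single i' (fun i'' _ hne => by simp [Pi.single_apply, hne])
          (by simp)]
        simp
      conv_lhs => rw [hz]
      rw [map_sum]
      simp only [map_smul, smul_eq_mul, hy]
      simp [Finset.sum_neg_distrib]
    refine ⟨y, hy0, fun j => ?_, ?_⟩
    · have hcol : (fun i => M i j) ∈ K := by
        refine ⟨fun s => if s = Sum.inl j then 1 else 0,
          fun s => by dsimp only; split <;> norm_num, ?_⟩
        rw [Finset.sum_eq_single (Sum.inl j) (fun s _ hne => by simp [hne])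
          (by simp)]
        simp [v]
      have h1 := hφK _ hcol
      rw [hφeval] at h1
      have : (0:ℝ) ≤ ∑ i, M i j * y i := by linarith
      simpa [Matrix.mulVec, dotProduct, Matrix.transpose_apply] using this
    · have h2 := hu0pos.trans hu0
      rw [hφeval] at h2
      simpa [dotProduct] using by linarith

open Finset

lemma exists_stationary {S : Type} [Fintype S] [DecidableEq S] [Nonempty S]
    (P : S → S → ℝ) (hpos : ∀ c d, 0 < P c d) (hrow : ∀ c, ∑ d, P c d = 1) :
    ∃ σ : S → ℝ, (∀ s, 0 < σ s) ∧ ∑ s, σ s = 1 ∧ ∀ d, ∑ c, σ c * P c d = σ d := by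
  classical
  set B : Matrix S S ℝ := Matrix.of P - 1 with hB
  have hdet : B.det = 0 := by
    rw [← Matrix.exists_mulVec_eq_zero_iff]
    refine ⟨fun _ => 1, ?_, ?_⟩
    · intro h
      have := congrFun h (Classical.arbitrary S)
      norm_num at this
    · funext c
      simp only [Matrix.mulVec, dotProduct, hB, Matrix.sub_apply, Matrix.of_apply,
        Matrix.one_apply, mul_one, Pi.zero_apply]
      rw [Finset.sum_sub_distrib, hrow]
      simp
  have hdetT : B.transpose.det = 0 := by rw [Matrix.det_transpose]; exact hdet
  obtain ⟨w, hw0, hw⟩ := (Matrix.exists_mulVec_eq_zero_iff).mpr hdetT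
  -- w is a left eigenvector: ∀ c, ∑ d, w d * P d c = w c
  have hstatw : ∀ c, ∑ d, w d * P d c = w c := by
    intro c
    have := congrFun hw c
    simp only [Matrix.mulVec, dotProduct, hB, Matrix.transpose_apply, Matrix.sub_apply,
      Matrix.of_apply, Matrix.one_apply, Pi.zero_apply] at this
    simp only [sub_mul, ite_mul, one_mul, zero_mul] at this
    rw [Finset.sum_sub_distrib, Finset.sum_ite_eq' Finset.univ c w, if_pos (Finset.mem_univ c),
      sub_eq_zero] at this
    rw [← this]
    exact Finset.sum_congr rfl fun d _ => mul_comm _ _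
  set u : S → ℝ := fun s => |w s| with hu
  have hule : ∀ c, u c ≤ ∑ d, u d * P d c := by
    intro c
    calc u c = |∑ d, w d * P d c| := by rw [hstatw]
    _ ≤ ∑ d, |w d * P d c| := Finset.abs_sum_le_sum_abs _ _
    _ = ∑ d, u d * P d c := Finset.sum_congr rfl fun d _ => by
        rw [abs_mul, abs_of_pos (hpos d c)]
  have husum : ∑ c, ∑ d, u d * P d c = ∑ c, u c := by
    rw [Finset.sum_comm]
    calc ∑ d, ∑ c, u d * P d c = ∑ d, u d * ∑ c, P d c := by
          exact Finset.sum_congr rfl fun d _ => by rw [Finset.mul_sum]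
    _ = ∑ d, u d := by simp [hrow]
  have hstatu : ∀ c, ∑ d, u d * P d c = u c := by
    by_contra hcon
    push_neg at hcon
    obtain ⟨c0, hc0⟩ := hcon
    have hlt : u c0 < ∑ d, u d * P d c0 := lt_of_le_of_ne (hule c0) (Ne.symm hc0)
    have : ∑ c, u c < ∑ c, ∑ d, u d * P d c :=
      Finset.sum_lt_sum (fun c _ => hule c) ⟨c0, Finset.mem_univ c0, hlt⟩
    rw [husum] at this
    exact lt_irrefl _ this
  have husum_pos : 0 < ∑ s, u s := by
    have hex : ∃ s, w s ≠ 0 := by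
      by_contra h
      push_neg at h
      exact hw0 (funext h)
    obtain ⟨s0, hs0⟩ := hex
    have : 0 < u s0 := abs_pos.mpr hs0
    refine lt_of_lt_of_le this (Finset.single_le_sum (fun s _ => abs_nonneg (w s))
      (Finset.mem_univ s0))
  set Z := ∑ s, u s with hZ
  refine ⟨fun s => u s / Z, fun s => ?_, ?_, fun d => ?_⟩
  · -- positivity: u s / Z > 0 since u stationary and some coordinate positive
    have : 0 < u s := by
      rw [← hstatu s]
      have hex : ∃ s0, 0 < u s0 := by
        by_contra h
        push_neg at h
        have : ∀ s, u s = 0 := fun s => le_antisymm (h s) (abs_nonneg _)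
        rw [hZ] at husum_pos
        simp [this] at husum_pos
      obtain ⟨s0, hs0⟩ := hex
      calc (0:ℝ) < u s0 * P s0 s := mul_pos hs0 (hpos s0 s)
      _ ≤ ∑ d, u d * P d s := Finset.single_le_sum
          (fun d _ => mul_nonneg (abs_nonneg _) (le_of_lt (hpos d s))) (Finset.mem_univ s0)
    positivity
  · rw [← Finset.sum_div, div_self (ne_of_gt husum_pos)]
  · dsimp only
    rw [← hstatu d, Finset.sum_div]
    exact Finset.sum_congr rfl fun c _ => by ring



open scoped BigOperators

section Prelim

variable {S : Type} [Fintype S] [DecidableEq S]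

/-- `σ` is a mixed strategy (probability distribution) on the finite set `S`. -/
def IsMixed (σ : S → ℝ) : Prop := (∀ s, 0 ≤ σ s) ∧ ∑ s, σ s = 1

/-- The Dirac measure `δ_s`. -/
def dirac (s : S) : S → ℝ := fun d => if d = s then 1 else 0

/-- `α_i * σ_i`, the image of the mixed strategy `σ` under the deviation plan `αᵢ`,
where `αᵢ c d` is the probability `αᵢ(d | c)`. -/
def devImage (αᵢ : S → S → ℝ) (σ : S → ℝ) : S → ℝ := fun d => ∑ c, σ c * αᵢ c d

/-- `σ` is `αᵢ`-stationary: `αᵢ * σ = σ`. -/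
def IsStationaryDist (αᵢ : S → S → ℝ) (σ : S → ℝ) : Prop := devImage αᵢ σ = σ

/-- A nonempty `B ⊆ S` is `αᵢ`-absorbing if `supp (αᵢ * c) ⊆ B` for all `c ∈ B`. -/
def IsAbsorbing (αᵢ : S → S → ℝ) (B : Finset S) : Prop :=
  B.Nonempty ∧ ∀ c ∈ B, ∀ d, 0 < αᵢ c d → d ∈ B

/-- A minimal absorbing set: an absorbing set containing no proper nonempty absorbing subset. -/
def IsMinimalAbsorbing (αᵢ : S → S → ℝ) (B : Finset S) : Prop :=
  IsAbsorbing αᵢ B ∧ ∀ B' ⊆ B, IsAbsorbing αᵢ B' → B' = B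

/-- `C_i/α_i`: the set of `αᵢ`-stationary mixed strategies whose support is contained
in some minimal `αᵢ`-absorbing set. -/
def ReducedSet (αᵢ : S → S → ℝ) : Set (S → ℝ) :=
  {σ | IsMixed σ ∧ IsStationaryDist αᵢ σ ∧
    ∃ B : Finset S, IsMinimalAbsorbing αᵢ B ∧ ∀ s, σ s ≠ 0 → s ∈ B}

end Prelim

section Games

variable {N : Type} [Fintype N] [DecidableEq N]
  {C : N → Type} [∀ i, Fintype (C i)] [∀ i, DecidableEq (C i)]

/-- Marginal probability of the pure strategy `cᵢ` of player `i` under `μ`. -/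
def marginal (μ : (∀ j, C j) → ℝ) (i : N) (cᵢ : C i) : ℝ :=
  ∑ c : ∀ j, C j, if c i = cᵢ then μ c else 0

/-- The incentive sum `∑_{c_{-i}} μ(c_{-i},cᵢ)[U_i(c_{-i},dᵢ) − U_i(c_{-i},cᵢ)]`. -/
def incentiveSum (U : ∀ i : N, (∀ j, C j) → ℝ) (μ : (∀ j, C j) → ℝ) (i : N) (cᵢ dᵢ : C i) : ℝ :=
  ∑ c : ∀ j, C j, if c i = cᵢ then μ c * (U i (Function.update c i dᵢ) - U i c) else 0

/-- Correlated equilibrium. -/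
def IsCorrelatedEq (U : ∀ i : N, (∀ j, C j) → ℝ) (μ : (∀ j, C j) → ℝ) : Prop :=
  (∀ c, 0 ≤ μ c) ∧ (∑ c : ∀ j, C j, μ c) = 1 ∧
    ∀ (i : N) (cᵢ dᵢ : C i), incentiveSum U μ i cᵢ dᵢ ≤ 0

/-- Multilinear extension: payoff of player `i` under the mixed strategy profile `σ`. -/
def mixedPayoff (U : ∀ i : N, (∀ j, C j) → ℝ) (σ : ∀ j, C j → ℝ) (i : N) : ℝ :=
  ∑ c : ∀ j, C j, (∏ j, σ j (c j)) * U i c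

/-- Nash equilibrium. -/
def IsNash (U : ∀ i : N, (∀ j, C j) → ℝ) (σ : ∀ j, C j → ℝ) : Prop :=
  (∀ i, IsMixed (σ i)) ∧
  ∀ (i : N) (dᵢ : C i),
    mixedPayoff U (Function.update σ i (dirac dᵢ)) i ≤ mixedPayoff U σ i

/-- `D(c, α) = ∑_i [U_i(c_{-i}, α_i * c_i) − U_i(c)]`. -/
def devGain (U : ∀ i : N, (∀ j, C j) → ℝ) (α : ∀ i, C i → C i → ℝ) (c : ∀ j, C j) : ℝ :=
  ∑ i, ((∑ dᵢ, α i (c i) dᵢ * U i (Function.update c i dᵢ)) - U i c)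

/-- A dual vector: a profile of deviation plans with `D(c,α) ≥ 0` for all `c`. -/
def IsDualVector (U : ∀ i : N, (∀ j, C j) → ℝ) (α : ∀ i, C i → C i → ℝ) : Prop :=
  (∀ (i : N) (cᵢ : C i), IsMixed (α i cᵢ)) ∧ ∀ c, 0 ≤ devGain U α c

/-- A strong dual vector: `D(c,α) > 0` whenever `c` has probability zero in all
correlated equilibria. -/
def IsStrong (U : ∀ i : N, (∀ j, C j) → ℝ) (α : ∀ i, C i → C i → ℝ) : Prop :=
  ∀ c : ∀ j, C j, (∀ μ, IsCorrelatedEq U μ → μ c = 0) → 0 < devGain U α c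

/-- A full dual vector: `α_i(dᵢ|cᵢ) > 0` whenever `β_i(dᵢ|cᵢ) > 0` for some dual vector `β`. -/
def IsFull (U : ∀ i : N, (∀ j, C j) → ℝ) (α : ∀ i, C i → C i → ℝ) : Prop :=
  ∀ (i : N) (cᵢ dᵢ : C i),
    (∃ β : ∀ i, C i → C i → ℝ, IsDualVector U β ∧ 0 < β i cᵢ dᵢ) → 0 < α i cᵢ dᵢ

end Games

/-- A game is tight if every correlated equilibrium satisfies all incentive constraints
with equality. -/
def IsTight {N : Type} [Fintype N] [DecidableEq N]
    {C : N → Type} [∀ i, Fintype (C i)] [∀ i, DecidableEq (C i)]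
    (U : ∀ i : N, (∀ j, C j) → ℝ) : Prop :=
  ∀ μ, IsCorrelatedEq U μ → ∀ (i : N) (cᵢ dᵢ : C i), incentiveSum U μ i cᵢ dᵢ = 0


section Main

variable {N : Type} [Fintype N] [DecidableEq N]
  {C : N → Type} [∀ i, Fintype (C i)] [∀ i, DecidableEq (C i)]

/-- The coefficient `A_t(c)` of the incentive constraint indexed by `t = (i, cᵢ, dᵢ)`. -/
def devA (U : ∀ i : N, (∀ j, C j) → ℝ) (t : Σ i : N, C i × C i) (c : ∀ j, C j) : ℝ :=
  if c t.1 = t.2.1 then U t.1 (Function.update c t.1 t.2.2) - U t.1 c else 0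

lemma incentiveSum_eq_devA (U : ∀ i : N, (∀ j, C j) → ℝ) (μ : (∀ j, C j) → ℝ)
    (i : N) (ci di : C i) :
    incentiveSum U μ i ci di = ∑ c, μ c * devA U ⟨i, (ci, di)⟩ c := by
  unfold incentiveSum devA
  exact Finset.sum_congr rfl fun c _ => by dsimp only; split <;> simp

lemma tight_posdual [Nonempty N] (U : ∀ i : N, (∀ j, C j) → ℝ) (htight : IsTight U) :
    ∃ Y : (Σ i : N, C i × C i) → ℝ, (∀ t, 0 < Y t) ∧
      ∀ c : ∀ j, C j, 0 ≤ ∑ t, Y t * devA U t c := by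
  classical
  have key : ∀ t0 : Σ i : N, C i × C i, ∃ y : (Σ i : N, C i × C i) → ℝ,
      (∀ t, 0 ≤ y t) ∧ 0 < y t0 ∧ ∀ c : ∀ j, C j, 0 ≤ ∑ t, y t * devA U t c := by
    intro t0
    have hTdef : True := trivial
    set M : Matrix ((Σ i : N, C i × C i) ⊕ Unit) (∀ j, C j) ℝ :=
      fun s c => Sum.elim (fun t => devA U t c) (fun _ => devA U t0 c) s with hM
    set b : (Σ i : N, C i × C i) ⊕ Unit → ℝ := Sum.elim (fun _ => 0) (fun _ => -1) with hb
    rcases farkas M b with ⟨x, hx0, hxle⟩ | ⟨u, hu0, huge, hudot⟩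
    · -- feasible: contradiction with tightness
      exfalso
      have hxt0 : M.mulVec x (Sum.inr ()) ≤ -1 := hxle (Sum.inr ())
      have hxne : ∃ c, 0 < x c := by
        by_contra h
        push_neg at h
        have hx00 : ∀ c, x c = 0 := fun c => le_antisymm (h c) (hx0 c)
        have : M.mulVec x (Sum.inr ()) = 0 := by
          simp [Matrix.mulVec, dotProduct, hx00]
        rw [this] at hxt0
        linarith
      obtain ⟨c0, hc0⟩ := hxne
      have hS : 0 < ∑ c, x c :=
        Finset.sum_pos' (fun c _ => hx0 c) ⟨c0, Finset.mem_univ c0, hc0⟩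
      set Sx := ∑ c, x c with hSx
      set μ : (∀ j, C j) → ℝ := fun c => x c / Sx with hμ
      have hμce : IsCorrelatedEq U μ := by
        refine ⟨fun c => div_nonneg (hx0 c) (le_of_lt hS), ?_, ?_⟩
        · rw [hμ]
          dsimp only
          rw [← Finset.sum_div, div_self (ne_of_gt hS)]
        · intro i ci di
          rw [incentiveSum_eq_devA]
          have h1 := hxle (Sum.inl ⟨i, (ci, di)⟩)
          have h2 : M.mulVec x (Sum.inl ⟨i, (ci, di)⟩)
              = ∑ c, devA U ⟨i, (ci, di)⟩ c * x c := by
            simp [Matrix.mulVec, dotProduct, hM]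
          rw [h2, hb] at h1
          simp only [Sum.elim_inl] at h1
          have : ∑ c, μ c * devA U ⟨i, (ci, di)⟩ c
              = (∑ c, devA U ⟨i, (ci, di)⟩ c * x c) / Sx := by
            rw [Finset.sum_div]
            exact Finset.sum_congr rfl fun c _ => by rw [hμ]; ring
          rw [this]
          exact div_nonpos_of_nonpos_of_nonneg h1 (le_of_lt hS)
      obtain ⟨i0, ci0, di0⟩ := t0
      have h0 := htight μ hμce i0 ci0 di0
      rw [incentiveSum_eq_devA] at h0
      have h2 : M.mulVec x (Sum.inr ()) = ∑ c, devA U ⟨i0, (ci0, di0)⟩ c * x c := by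
        simp [Matrix.mulVec, dotProduct, hM]
      rw [h2] at hxt0
      have : ∑ c, μ c * devA U ⟨i0, (ci0, di0)⟩ c
          = (∑ c, devA U ⟨i0, (ci0, di0)⟩ c * x c) / Sx := by
        rw [Finset.sum_div]
        exact Finset.sum_congr rfl fun c _ => by rw [hμ]; ring
      rw [this] at h0
      have hlt : (∑ c, devA U ⟨i0, (ci0, di0)⟩ c * x c) / Sx < 0 :=
        div_neg_of_neg_of_pos (lt_of_le_of_lt hxt0 (by norm_num)) hS
      rw [h0] at hlt
      exact lt_irrefl _ hlt
    · -- infeasible: extract dual vector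
      have hlam : 0 < u (Sum.inr ()) := by
        have : dotProduct b u = -u (Sum.inr ()) := by
          have e1 : dotProduct b u = ∑ s : (Σ i : N, C i × C i) ⊕ Unit, b s * u s := rfl
          rw [e1, Fintype.sum_sum_type,
            Fintype.sum_unique (fun x : Unit => b (Sum.inr x) * u (Sum.inr x))]
          simp [hb]
        rw [this] at hudot
        linarith
      refine ⟨fun t => u (Sum.inl t) + (if t = t0 then u (Sum.inr ()) else 0), ?_, ?_, ?_⟩
      · intro t
        have h1 := hu0 (Sum.inl t)
        by_cases h : t = t0
        · dsimp only; rw [if_pos h]; linarith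
        · dsimp only; rw [if_neg h]; linarith
      · dsimp only
        rw [if_pos rfl]
        have := hu0 (Sum.inl t0)
        linarith
      · intro c
        have h1 := huge c
        have h2 : M.transpose.mulVec u c
            = (∑ t, devA U t c * u (Sum.inl t)) + devA U t0 c * u (Sum.inr ()) := by
          have e1 : M.transpose.mulVec u c = ∑ s : (Σ i : N, C i × C i) ⊕ Unit, M s c * u s := rfl
          rw [e1, Fintype.sum_sum_type,
            Fintype.sum_unique (fun x : Unit => M (Sum.inr x) c * u (Sum.inr x))]
          simp [hM, mul_comm]
        rw [h2] at h1
        have h3 : ∑ t, (u (Sum.inl t) + (if t = t0 then u (Sum.inr ()) else 0)) * devA U t c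
            = (∑ t, devA U t c * u (Sum.inl t)) + devA U t0 c * u (Sum.inr ()) := by
          simp only [add_mul, ite_mul, zero_mul]
          rw [Finset.sum_add_distrib]
          congr 1
          · exact Finset.sum_congr rfl fun t _ => mul_comm _ _
          · rw [Finset.sum_ite_eq' Finset.univ t0 (fun t => u (Sum.inr ()) * devA U t c),
              if_pos (Finset.mem_univ t0)]
            ring
        rw [h3]
        exact h1
  choose y hy0 hypos hyge using key
  refine ⟨fun t => ∑ t0, y t0 t, fun t => ?_, fun c => ?_⟩
  · exact Finset.sum_pos' (fun t0 _ => hy0 t0 t) ⟨t, Finset.mem_univ t, hypos t⟩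
  · have h1 : ∑ t, (∑ t0, y t0 t) * devA U t c = ∑ t, ∑ t0, y t0 t * devA U t c :=
      Finset.sum_congr rfl fun t _ => Finset.sum_mul _ _ _
    rw [h1, Finset.sum_comm]
    exact Finset.sum_nonneg fun t0 _ => hyge t0 c


lemma sum_devA (U : ∀ i : N, (∀ j, C j) → ℝ) (Y : (Σ i : N, C i × C i) → ℝ)
    (c : ∀ j, C j) :
    ∑ t, Y t * devA U t c
      = ∑ i, ∑ d, Y ⟨i, (c i, d)⟩ * (U i (Function.update c i d) - U i c) := by
  classical
  rw [← Finset.univ_sigma_univ, Finset.sum_sigma]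
  refine Finset.sum_congr rfl fun i _ => ?_
  rw [Fintype.sum_prod_type]
  have e1 : ∀ ci : C i, ∑ di, Y ⟨i, (ci, di)⟩ * devA U ⟨i, (ci, di)⟩ c
      = if c i = ci then ∑ di, Y ⟨i, (ci, di)⟩ * (U i (Function.update c i di) - U i c)
        else 0 := by
    intro ci
    by_cases hc : c i = ci
    · rw [if_pos hc]
      refine Finset.sum_congr rfl fun di _ => ?_
      unfold devA
      rw [if_pos hc]
    · rw [if_neg hc]
      refine Finset.sum_eq_zero fun di _ => ?_
      unfold devA
      rw [if_neg hc, mul_zero]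
  rw [Finset.sum_congr rfl fun ci _ => e1 ci]
  rw [Finset.sum_ite_eq Finset.univ (c i), if_pos (Finset.mem_univ _)]


end Main

/-- Any tight finite game has a completely mixed Nash equilibrium. -/
theorem tight_has_completely_mixed_nash
    {N : Type} [Fintype N] [DecidableEq N] [Nonempty N]
    {C : N → Type} [∀ i, Fintype (C i)] [∀ i, DecidableEq (C i)] [∀ i, Nonempty (C i)]
    (U : ∀ i : N, (∀ j, C j) → ℝ) (htight : IsTight U) :
    ∃ σ : ∀ i, C i → ℝ, IsNash U σ ∧ ∀ (i : N) (cᵢ : C i), 0 < σ i cᵢ := by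
  classical
  obtain ⟨Y, hYpos, hYge⟩ := tight_posdual U htight
  set M0 : ℝ := 1 + ∑ t, Y t with hM0
  have hM0pos : 0 < M0 := by
    have : 0 ≤ ∑ t, Y t := Finset.sum_nonneg fun t _ => le_of_lt (hYpos t)
    rw [hM0]; linarith
  set α : ∀ i, C i → C i → ℝ := fun i ci di =>
    Y ⟨i, (ci, di)⟩ / M0 + (if di = ci then 1 - (∑ e, Y ⟨i, (ci, e)⟩) / M0 else 0) with hα
  have hSle : ∀ (i : N) (ci : C i), ∑ e, Y ⟨i, (ci, e)⟩ < M0 := by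
    intro i ci
    have h1 : ∑ e, Y ⟨i, (ci, e)⟩
        = ∑ t ∈ Finset.univ.image (fun e : C i => (⟨i, (ci, e)⟩ : Σ i : N, C i × C i)), Y t := by
      rw [Finset.sum_image (fun e _ e' _ hh => by simpa using hh)]
    have h2 : ∑ t ∈ Finset.univ.image (fun e : C i => (⟨i, (ci, e)⟩ : Σ i : N, C i × C i)), Y t
        ≤ ∑ t, Y t :=
      Finset.sum_le_sum_of_subset_of_nonneg (Finset.subset_univ _)
        (fun t _ _ => le_of_lt (hYpos t))
    rw [hM0]; linarith
  have hαpos : ∀ (i : N) (ci di : C i), 0 < α i ci di := by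
    intro i ci di
    have hY := hYpos ⟨i, (ci, di)⟩
    have hdiv : 0 < Y ⟨i, (ci, di)⟩ / M0 := div_pos hY hM0pos
    simp only [hα]
    split
    · have := hSle i ci
      have : 0 < 1 - (∑ e, Y ⟨i, (ci, e)⟩) / M0 := by
        rw [sub_pos, div_lt_one hM0pos]; exact this
      linarith
    · linarith
  have hαsum : ∀ (i : N) (ci : C i), ∑ di, α i ci di = 1 := by
    intro i ci
    simp only [hα]
    rw [Finset.sum_add_distrib, Finset.sum_ite_eq' Finset.univ ci
      (fun _ => 1 - (∑ e, Y ⟨i, (ci, e)⟩) / M0), if_pos (Finset.mem_univ ci),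
      ← Finset.sum_div]
    ring
  have hαgain : ∀ c : ∀ j, C j,
      0 ≤ ∑ i, ((∑ d, α i (c i) d * U i (Function.update c i d)) - U i c) := by
    intro c
    have key : ∀ i : N, (∑ d, α i (c i) d * U i (Function.update c i d)) - U i c
        = (∑ d, Y ⟨i, (c i, d)⟩ * (U i (Function.update c i d) - U i c)) / M0 := by
      intro i
      have e1 : ∀ d : C i, α i (c i) d * U i (Function.update c i d)
          = Y ⟨i, (c i, d)⟩ * U i (Function.update c i d) / M0
            + (if d = c i then (1 - (∑ e, Y ⟨i, (c i, e)⟩) / M0) * U i (Function.update c i d)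
              else 0) := by
        intro d
        simp only [hα]
        by_cases hd : d = c i
        · rw [if_pos hd, if_pos hd]; ring
        · rw [if_neg hd, if_neg hd]; ring
      rw [Finset.sum_congr rfl fun d _ => e1 d, Finset.sum_add_distrib,
        Finset.sum_ite_eq' Finset.univ (c i)
          (fun d => (1 - (∑ e, Y ⟨i, (c i, e)⟩) / M0) * U i (Function.update c i d)),
        if_pos (Finset.mem_univ _), Function.update_eq_self]
      have e2 : (∑ d, Y ⟨i, (c i, d)⟩ * (U i (Function.update c i d) - U i c))
          = (∑ d, Y ⟨i, (c i, d)⟩ * U i (Function.update c i d))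
            - (∑ d, Y ⟨i, (c i, d)⟩) * U i c := by
        rw [Finset.sum_congr rfl fun d _ => mul_sub (Y ⟨i, (c i, d)⟩) _ _,
          Finset.sum_sub_distrib, Finset.sum_mul]
      have e3 : (∑ d, Y ⟨i, (c i, d)⟩ * U i (Function.update c i d) / M0)
          = (∑ d, Y ⟨i, (c i, d)⟩ * U i (Function.update c i d)) / M0 :=
        (Finset.sum_div _ _ _).symm
      rw [e2, e3]
      ring
    rw [Finset.sum_congr rfl fun i _ => key i, ← Finset.sum_div]
    rw [← sum_devA U Y c]
    exact div_nonneg (hYge c) (le_of_lt hM0pos)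
  -- stationary distributions
  have hstatex : ∀ i : N, ∃ σi : C i → ℝ, (∀ s, 0 < σi s) ∧ ∑ s, σi s = 1 ∧
      ∀ d, ∑ cc, σi cc * α i cc d = σi d := fun i =>
    exists_stationary (α i) (hαpos i) (hαsum i)
  choose σ hσpos hσsum hσstat using hstatex
  -- auxiliary products and payoff functions
  set Q : ∀ i : N, (∀ j, C j) → ℝ := fun i c => ∏ j ∈ Finset.univ.erase i, σ j (c j) with hQ
  have hQnonneg : ∀ i c, 0 ≤ Q i c :=
    fun i c => Finset.prod_nonneg fun j _ => le_of_lt (hσpos j (c j))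
  set W : ∀ i : N, C i → ℝ := fun i d => ∑ c, (if c i = d then Q i c * U i c else 0) with hW
  have hprod : ∀ (i : N) (τ : C i → ℝ) (c : ∀ j, C j),
      ∏ j, (Function.update σ i τ) j (c j) = τ (c i) * Q i c := by
    intro i τ c
    rw [← Finset.mul_prod_erase Finset.univ _ (Finset.mem_univ i)]
    rw [Function.update_self]
    congr 1
    exact Finset.prod_congr rfl fun j hj =>
      by rw [Function.update_of_ne (Finset.ne_of_mem_erase hj)]
  -- E0 : deviation payoffs
  have E0 : ∀ (i : N) (d : C i),
      mixedPayoff U (Function.update σ i (dirac d)) i = W i d := by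
    intro i d
    unfold mixedPayoff
    rw [Finset.sum_congr rfl fun c _ => by rw [hprod i (dirac d) c]]
    refine Finset.sum_congr rfl fun c _ => ?_
    unfold dirac
    by_cases hc : c i = d
    · rw [if_pos hc, if_pos hc]; ring
    · rw [if_neg hc, if_neg hc]; ring
  -- E1 : own payoff
  have E1 : ∀ i : N, mixedPayoff U σ i = ∑ d, σ i d * W i d := by
    intro i
    unfold mixedPayoff
    have e1 : ∀ c : ∀ j, C j, (∏ j, σ j (c j)) * U i c = σ i (c i) * (Q i c * U i c) := by
      intro c
      have : ∏ j, σ j (c j) = σ i (c i) * Q i c := by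
        rw [← Finset.mul_prod_erase Finset.univ _ (Finset.mem_univ i)]
      rw [this]; ring
    rw [Finset.sum_congr rfl fun c _ => e1 c]
    have e2 : ∀ d : C i, σ i d * W i d = ∑ c, (if c i = d then σ i d * (Q i c * U i c) else 0) := by
      intro d
      rw [hW]
      dsimp only
      rw [Finset.mul_sum]
      exact Finset.sum_congr rfl fun c _ => by
        by_cases hc : c i = d
        · rw [if_pos hc, if_pos hc]
        · rw [if_neg hc, if_neg hc, mul_zero]
    rw [Finset.sum_congr rfl fun d _ => e2 d, Finset.sum_comm]
    refine Finset.sum_congr rfl fun c _ => ?_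
    rw [Finset.sum_ite_eq Finset.univ (c i) (fun d => σ i d * (Q i c * U i c)),
      if_pos (Finset.mem_univ _)]
  -- E2 : the key inequality
  have E2 : ∀ (i : N) (b0 : C i), W i b0 ≤ ∑ d, α i b0 d * W i d := by
    intro i b0
    set ν : (∀ j, C j) → ℝ := fun c => if c i = b0 then Q i c else 0 with hν
    have hνnonneg : ∀ c, 0 ≤ ν c := by
      intro c; simp only [hν]; split
      · exact hQnonneg i c
      · exact le_rfl
    have hstart : 0 ≤ ∑ c, ν c *
        ∑ j, ((∑ d, α j (c j) d * U j (Function.update c j d)) - U j c) :=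
      Finset.sum_nonneg fun c _ => mul_nonneg (hνnonneg c) (hαgain c)
    have hexp : ∑ c, ν c * ∑ j, ((∑ d, α j (c j) d * U j (Function.update c j d)) - U j c)
        = ∑ j, ((∑ c, ∑ d, ν c * (α j (c j) d * U j (Function.update c j d)))
            - ∑ c, ν c * U j c) := by
      have e1 : ∀ c : ∀ j, C j,
          ν c * ∑ j, ((∑ d, α j (c j) d * U j (Function.update c j d)) - U j c)
          = ∑ j, ((∑ d, ν c * (α j (c j) d * U j (Function.update c j d))) - ν c * U j c) := by
        intro c
        rw [Finset.mul_sum]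
        exact Finset.sum_congr rfl fun j _ => by rw [mul_sub, Finset.mul_sum]
      rw [Finset.sum_congr rfl fun c _ => e1 c, Finset.sum_comm]
      exact Finset.sum_congr rfl fun j _ => by rw [Finset.sum_sub_distrib]
    have hTj : ∀ j : N, j ≠ i →
        (∑ c, ∑ d, ν c * (α j (c j) d * U j (Function.update c j d))) = ∑ c, ν c * U j c := by
      intro j hj
      -- rewrite via the involution (c, d) ↦ (update c j d, c j)
      have hswap : (∑ c, ∑ d, ν c * (α j (c j) d * U j (Function.update c j d)))
          = ∑ c, ∑ d, ν (Function.update c j d) * (α j d (c j) * U j c) := by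
        rw [← Fintype.sum_prod_type']
        rw [← Fintype.sum_prod_type']
        have hinv : Function.Involutive
            (fun p : (∀ k, C k) × C j => (Function.update p.1 j p.2, p.1 j)) := by
          intro p
          obtain ⟨c, d⟩ := p
          dsimp only
          have h2 : Function.update (Function.update c j d) j (c j) = c := by
            funext k
            by_cases hk : k = j
            · subst hk; rw [Function.update_self]
            · rw [Function.update_of_ne hk, Function.update_of_ne hk]
          rw [h2, Function.update_self]
        refine Fintype.sum_equiv hinv.toPerm _ _ ?_
        intro p
        obtain ⟨c, d⟩ := p
        show ν c * (α j (c j) d * U j (Function.update c j d))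
            = ν (Function.update (Function.update c j d) j (c j))
              * (α j (c j) (Function.update c j d j) * U j (Function.update c j d))
        have h2 : Function.update (Function.update c j d) j (c j) = c := by
          funext k
          by_cases hk : k = j
          · subst hk; rw [Function.update_self]
          · rw [Function.update_of_ne hk, Function.update_of_ne hk]
        rw [h2, Function.update_self]
      rw [hswap]
      -- now use stationarity pointwise in c
      refine Finset.sum_congr rfl fun c _ => ?_
      have hR : ∀ d : C j, ν (Function.update c j d)
          = (if c i = b0 then σ j d * ∏ k ∈ (Finset.univ.erase i).erase j, σ k (c k) else 0) := by
        intro d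
        simp only [hν]
        have hci : Function.update c j d i = c i := Function.update_of_ne (Ne.symm hj) d c
        rw [hci]
        by_cases hc : c i = b0
        · rw [if_pos hc, if_pos hc]
          rw [hQ]
          dsimp only
          have hjmem : j ∈ Finset.univ.erase i := Finset.mem_erase.mpr ⟨hj, Finset.mem_univ j⟩
          rw [← Finset.mul_prod_erase _ _ hjmem, Function.update_self]
          congr 1
          exact Finset.prod_congr rfl fun k hk => by
            rw [Function.update_of_ne (Finset.ne_of_mem_erase hk)]
        · rw [if_neg hc, if_neg hc]
      by_cases hc : c i = b0
      · have hQc : Q i c = σ j (c j) * ∏ k ∈ (Finset.univ.erase i).erase j, σ k (c k) := by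
          rw [hQ]
          dsimp only
          have hjmem : j ∈ Finset.univ.erase i := Finset.mem_erase.mpr ⟨hj, Finset.mem_univ j⟩
          rw [← Finset.mul_prod_erase _ _ hjmem]
        rw [Finset.sum_congr rfl fun d _ => by rw [hR d, if_pos hc]]
        have : ν c = Q i c := by simp only [hν]; rw [if_pos hc]
        rw [this, hQc]
        set R := ∏ k ∈ (Finset.univ.erase i).erase j, σ k (c k) with hRdef
        have : ∑ d, σ j d * R * (α j d (c j) * U j c)
            = (∑ d, σ j d * α j d (c j)) * (R * U j c) := by
          rw [Finset.sum_mul]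
          exact Finset.sum_congr rfl fun d _ => by ring
        rw [this, hσstat j (c j)]
        ring
      · rw [Finset.sum_congr rfl fun d _ => by rw [hR d, if_neg hc, zero_mul]]
        have : ν c = 0 := by simp only [hν]; rw [if_neg hc]
        rw [this, zero_mul, Finset.sum_const, smul_zero]
    have hTi : (∑ c, ∑ d, ν c * (α i (c i) d * U i (Function.update c i d)))
        = ∑ d, α i b0 d * W i d := by
      rw [Finset.sum_comm]
      refine Finset.sum_congr rfl fun d _ => ?_
      have e1 : ∀ c : ∀ j, C j, ν c * (α i (c i) d * U i (Function.update c i d))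
          = α i b0 d * (if c i = b0 then Q i c * U i (Function.update c i d) else 0) := by
        intro c
        simp only [hν]
        by_cases hc : c i = b0
        · rw [if_pos hc, if_pos hc, hc]; ring
        · rw [if_neg hc, if_neg hc]; ring
      rw [Finset.sum_congr rfl fun c _ => e1 c, ← Finset.mul_sum]
      congr 1
      -- ∑ c, if c i = b0 then Q i c * U i (update c i d) else 0 = W i d
      rw [hW]
      dsimp only
      rw [← Finset.sum_filter, ← Finset.sum_filter]
      refine Finset.sum_bij' (fun c _ => Function.update c i d)
        (fun c _ => Function.update c i b0) ?_ ?_ ?_ ?_ ?_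
      · intro c hcmem
        rw [Finset.mem_filter] at hcmem ⊢
        exact ⟨Finset.mem_univ _, Function.update_self i d c⟩
      · intro c hcmem
        rw [Finset.mem_filter] at hcmem ⊢
        exact ⟨Finset.mem_univ _, Function.update_self i b0 c⟩
      · intro c hcmem
        rw [Finset.mem_filter] at hcmem
        funext k
        by_cases hk : k = i
        · subst hk; rw [Function.update_self, hcmem.2]
        · rw [Function.update_of_ne hk, Function.update_of_ne hk]
      · intro c hcmem
        rw [Finset.mem_filter] at hcmem
        funext k
        by_cases hk : k = i
        · subst hk; rw [Function.update_self, hcmem.2]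
        · rw [Function.update_of_ne hk, Function.update_of_ne hk]
      · intro c hcmem
        rw [Finset.mem_filter] at hcmem
        have hQeq : Q i (Function.update c i d) = Q i c := by
          rw [hQ]
          exact Finset.prod_congr rfl fun k hk => by
            rw [Function.update_of_ne (Finset.ne_of_mem_erase hk)]
        rw [hQeq]
    have hTi2 : ∑ c, ν c * U i c = W i b0 := by
      rw [hW]
      simp only [hν]
      refine Finset.sum_congr rfl fun c _ => ?_
      by_cases hc : c i = b0
      · rw [if_pos hc, if_pos hc]
      · rw [if_neg hc, if_neg hc, zero_mul]
    rw [hexp] at hstart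
    have hsum0 : ∑ j, ((∑ c, ∑ d, ν c * (α j (c j) d * U j (Function.update c j d)))
        - ∑ c, ν c * U j c) = (∑ d, α i b0 d * W i d) - W i b0 := by
      rw [Finset.sum_eq_single i]
      · rw [hTi, hTi2]
      · intro j _ hji
        rw [hTj j hji, sub_self]
      · intro hmem
        exact absurd (Finset.mem_univ i) hmem
    rw [hsum0] at hstart
    linarith
  -- E3 : each W i is constant
  have E3 : ∀ i : N, ∃ b0 : C i, ∀ d, W i d = W i b0 := by
    intro i
    obtain ⟨b0, _, hb0⟩ := Finset.exists_max_image Finset.univ (W i)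
      ⟨Classical.arbitrary (C i), Finset.mem_univ _⟩
    refine ⟨b0, fun d => ?_⟩
    have h1 := E2 i b0
    have hle : ∀ d ∈ Finset.univ, α i b0 d * W i d ≤ α i b0 d * W i b0 :=
      fun d _ => mul_le_mul_of_nonneg_left (hb0 d (Finset.mem_univ d)) (le_of_lt (hαpos i b0 d))
    have h2 : ∑ d, α i b0 d * W i b0 = W i b0 := by
      rw [← Finset.sum_mul, hαsum i b0, one_mul]
    have h3 : ∑ d, α i b0 d * W i d = ∑ d, α i b0 d * W i b0 := by
      apply le_antisymm (Finset.sum_le_sum hle)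
      rw [h2]; exact h1
    have h4 := (Finset.sum_eq_sum_iff_of_le hle).mp h3
    have h5 := h4 d (Finset.mem_univ d)
    exact mul_left_cancel₀ (ne_of_gt (hαpos i b0 d)) h5
  -- conclusion
  refine ⟨σ, ⟨fun i => ⟨fun s => le_of_lt (hσpos i s), hσsum i⟩, fun i di => ?_⟩,
    fun i ci => hσpos i ci⟩
  obtain ⟨b0, hb0⟩ := E3 i
  rw [E0 i di, E1 i]
  rw [hb0 di]
  have : ∑ d, σ i d * W i d = W i b0 := by
    rw [Finset.sum_congr rfl fun d _ => by rw [hb0 d], ← Finset.sum_mul, hσsum i, one_mul]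
  rw [this]
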